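/- Let H be a real Hilbert space with orthogonal projection P onto a closed subspace, and let f, g ∈ H be nonzero. Set S = ‖Pf‖²/‖f‖² and Ŝ = ‖Pg‖²/‖g‖². Then |S − Ŝ| ≤ (√(S(1−Ŝ)) + √(Ŝ(1−S))) · ‖f − g‖/‖f‖. -/

import Mathlib

open scoped RealInnerProductSpace

lemma pyth_aux {H : Type*} [NormedAddCommGroup H] [InnerProductSpace ℝ H]
    (K : Submodule ℝ H) [CompleteSpace K] (x : H) :
    ‖x‖ ^ 2 = ‖(K.orthogonalProjectionOnto x : H)‖ ^ 2 + ‖x - (K.orthogonalProjectionOnto x : H)‖ ^ 2 := by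
  have h0 : (inner ℝ ((K.orthogonalProjectionOnto x : H)) (x - (K.orthogonalProjectionOnto x : H)) : ℝ) = 0 :=
    (K.sub_starProjection_mem_orthogonal x) _ (K.orthogonalProjectionOnto x).2
  have hx : x = (K.orthogonalProjectionOnto x : H) + (x - (K.orthogonalProjectionOnto x : H)) := by abel
  calc ‖x‖ ^ 2 = ‖(K.orthogonalProjectionOnto x : H) + (x - (K.orthogonalProjectionOnto x : H))‖ ^ 2 := by
        rw [← hx]
    _ = _ := by rw [norm_add_sq_real, h0]; ring

lemma key_aux (a b c d p q F G E : ℝ) (ha : 0 ≤ a) (hb : 0 ≤ b) (hc : 0 ≤ c) (hd : 0 ≤ d)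
    (hp : 0 ≤ p) (hq : 0 ≤ q) (hF : 0 < F) (hG : 0 < G) (hE : 0 ≤ E)
    (h1 : F ^ 2 = a ^ 2 + b ^ 2) (h2 : G ^ 2 = c ^ 2 + d ^ 2) (h3 : E ^ 2 = p ^ 2 + q ^ 2)
    (h4 : |a - c| ≤ p) (h5 : |b - d| ≤ q) :
    |a ^ 2 / F ^ 2 - c ^ 2 / G ^ 2| ≤
      (Real.sqrt (a ^ 2 / F ^ 2 * (1 - c ^ 2 / G ^ 2)) +
        Real.sqrt (c ^ 2 / G ^ 2 * (1 - a ^ 2 / F ^ 2))) * (E / F) := by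
  have hG2 : (1 : ℝ) - c ^ 2 / G ^ 2 = d ^ 2 / G ^ 2 := by
    field_simp
    linarith [h2]
  have hF2 : (1 : ℝ) - a ^ 2 / F ^ 2 = b ^ 2 / F ^ 2 := by
    field_simp
    linarith [h1]
  rw [hG2, hF2]
  have hs1 : Real.sqrt (a ^ 2 / F ^ 2 * (d ^ 2 / G ^ 2)) = a * d / (F * G) := by
    rw [show a ^ 2 / F ^ 2 * (d ^ 2 / G ^ 2) = (a * d / (F * G)) ^ 2 by ring,
      Real.sqrt_sq (by positivity)]
  have hs2 : Real.sqrt (c ^ 2 / G ^ 2 * (b ^ 2 / F ^ 2)) = c * b / (F * G) := by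
    rw [show c ^ 2 / G ^ 2 * (b ^ 2 / F ^ 2) = (c * b / (F * G)) ^ 2 by ring,
      Real.sqrt_sq (by positivity)]
  rw [hs1, hs2]
  -- key inequality |a*d - b*c| ≤ G * E
  have hdp : d * p + c * q ≤ G * E := by
    nlinarith [sq_nonneg (d * q - c * p), mul_nonneg hG.le hE, sq_nonneg (G * E - (d * p + c * q)),
      mul_nonneg (mul_nonneg hd hp) (mul_nonneg hc hq), add_nonneg (mul_nonneg hd hp) (mul_nonneg hc hq)]
  have h6 : |a * d - b * c| ≤ G * E := by
    have e1 : a * d - b * c = d * (a - c) + c * (d - b) := by ring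
    have e2 : |a * d - b * c| ≤ d * p + c * q := by
      rw [e1]
      calc |d * (a - c) + c * (d - b)| ≤ |d * (a - c)| + |c * (d - b)| := abs_add_le _ _
        _ = d * |a - c| + c * |b - d| := by
            rw [abs_mul, abs_mul, abs_of_nonneg hd, abs_of_nonneg hc, abs_sub_comm d b]
        _ ≤ d * p + c * q := by gcongr
    linarith
  have habs : |a ^ 2 / F ^ 2 - c ^ 2 / G ^ 2| =
      |a * d - b * c| * (a * d + b * c) / (F ^ 2 * G ^ 2) := by
    rw [div_sub_div _ _ (by positivity) (by positivity), abs_div,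
      abs_of_pos (show (0:ℝ) < F ^ 2 * G ^ 2 by positivity)]
    congr 1
    rw [show a ^ 2 * G ^ 2 - F ^ 2 * c ^ 2 = (a * d - b * c) * (a * d + b * c) by
        linear_combination a ^ 2 * h2 - c ^ 2 * h1,
      abs_mul, abs_of_nonneg (show (0:ℝ) ≤ a * d + b * c by positivity)]
  rw [habs, div_le_iff₀ (by positivity)]
  have hrhs : (a * d / (F * G) + c * b / (F * G)) * (E / F) * (F ^ 2 * G ^ 2)
      = G * E * (a * d + b * c) := by
    field_simp
  rw [hrhs]
  exact mul_le_mul_of_nonneg_right h6 (by positivity)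

theorem stmt_3 {H : Type*} [NormedAddCommGroup H] [InnerProductSpace ℝ H] [CompleteSpace H]
    (K : Submodule ℝ H) [CompleteSpace K]
    (f g : H) (hf : f ≠ 0) (hg : g ≠ 0)
    (S Shat : ℝ)
    (hS : S = ‖(K.orthogonalProjectionOnto f : H)‖ ^ 2 / ‖f‖ ^ 2)
    (hShat : Shat = ‖(K.orthogonalProjectionOnto g : H)‖ ^ 2 / ‖g‖ ^ 2) :
    |S - Shat| ≤ (Real.sqrt (S * (1 - Shat)) + Real.sqrt (Shat * (1 - S))) * (‖f - g‖ / ‖f‖) := by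
  subst hS hShat
  have hP : (K.orthogonalProjectionOnto (f - g) : H)
      = (K.orthogonalProjectionOnto f : H) - (K.orthogonalProjectionOnto g : H) := by
    rw [map_sub]; rfl
  have hQ : (f - g) - (K.orthogonalProjectionOnto (f - g) : H)
      = (f - (K.orthogonalProjectionOnto f : H)) - (g - (K.orthogonalProjectionOnto g : H)) := by
    rw [hP]; abel
  apply key_aux (‖(K.orthogonalProjectionOnto f : H)‖) (‖f - (K.orthogonalProjectionOnto f : H)‖)
    (‖(K.orthogonalProjectionOnto g : H)‖) (‖g - (K.orthogonalProjectionOnto g : H)‖)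
    (‖(K.orthogonalProjectionOnto (f - g) : H)‖) (‖(f - g) - (K.orthogonalProjectionOnto (f - g) : H)‖)
    ‖f‖ ‖g‖ ‖f - g‖
    (norm_nonneg _) (norm_nonneg _) (norm_nonneg _) (norm_nonneg _) (norm_nonneg _)
    (norm_nonneg _) (norm_pos_iff.mpr hf) (norm_pos_iff.mpr hg) (norm_nonneg _)
    (pyth_aux K f) (pyth_aux K g) (pyth_aux K (f - g))
  · rw [hP]; exact abs_norm_sub_norm_le _ _
  · rw [hQ]; exact abs_norm_sub_norm_le _ _
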